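/- Let Y be a nonempty finite type, u : Y → ℝ, τ > 0, and let π, π_ref : Y → ℝ be strictly positive with Σ_{y ∈ Y} π(y) = 1. Suppose that for all y1, y2 ∈ Y, log(π(y1)/π_ref(y1)) − log(π(y2)/π_ref(y2)) = (u(y1) − u(y2))/τ. Then for all y ∈ Y, π(y) = π_ref(y)·exp(u(y)/τ) / Σ_{y' ∈ Y} π_ref(y')·exp(u(y')/τ); i.e., π equals the Bradley–Terry policy π*. -/
import Mathlib


theorem stmt_12 {Y : Type*} [Fintype Y] [Nonempty Y]
    (u : Y → ℝ) (τ : ℝ) (hτ : 0 < τ)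
    (π πref : Y → ℝ) (hπ : ∀ y, 0 < π y) (hπref : ∀ y, 0 < πref y)
    (hsum : ∑ y, π y = 1)
    (hmargin : ∀ y1 y2 : Y,
      Real.log (π y1 / πref y1) - Real.log (π y2 / πref y2) =
        (u y1 - u y2) / τ) :
    ∀ y : Y,
      π y = πref y * Real.exp (u y / τ) /
        ∑ y', πref y' * Real.exp (u y' / τ) := by
  obtain ⟨y0⟩ := ‹Nonempty Y›
  set C : ℝ := π y0 / πref y0 * Real.exp (-(u y0 / τ)) with hC
  have key : ∀ y, π y = πref y * Real.exp (u y / τ) * C := by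
    intro y
    have h := hmargin y y0
    have hpos : 0 < π y / πref y := div_pos (hπ y) (hπref y)
    have hpos0 : 0 < π y0 / πref y0 := div_pos (hπ y0) (hπref y0)
    have hlog : Real.log (π y / πref y) =
        (u y - u y0) / τ + Real.log (π y0 / πref y0) := by linarith
    have hratio : π y / πref y =
        Real.exp ((u y - u y0) / τ + Real.log (π y0 / πref y0)) := by
      rw [← Real.exp_log hpos, hlog]
    have hy : π y = (π y / πref y) * πref y :=
      (div_mul_cancel₀ _ (hπref y).ne').symm
    rw [hy, hratio, Real.exp_add, Real.exp_log hpos0, sub_div,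
      Real.exp_sub, hC, Real.exp_neg]
    ring
  have hSpos : 0 < ∑ y', πref y' * Real.exp (u y' / τ) :=
    Finset.sum_pos (fun y _ => mul_pos (hπref y) (Real.exp_pos _)) Finset.univ_nonempty
  have hsum' : (∑ y', πref y' * Real.exp (u y' / τ)) * C = 1 := by
    rw [← hsum, Finset.sum_mul]
    exact Finset.sum_congr rfl fun y _ => (key y).symm
  intro y
  rw [key y, eq_div_iff hSpos.ne']
  linear_combination (πref y * Real.exp (u y / τ)) * hsum'
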